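/- Closure of the raising sector of the centrix algebra under overlap: let < be the total order on finite sequences over Fin Λ given by comparing lengths first and then lexicographically. If I > J, K > L (all sequences nonempty), and J = J₁·J₂, K = K₁·K₂ are decompositions with J₂ = K₁ (and K₂ nonempty), then I·K₂ > J₁·L. (This shows the corresponding term σ^{I·K₂}_{J₁·L} in the bracket [σ^I_J, σ^K_L] again lies in the raising subalgebra Σ̂⁺.) -/

import Mathlib

/-- The total order on finite sequences over `Fin Λ`: longer sequences are greater,
and sequences of equal length are compared lexicographically.  `seqGt X Y` means
`X > Y`. -/
def seqGt {Λ : ℕ} (X Y : List (Fin Λ)) : Prop :=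
  Y.length < X.length ∨ (X.length = Y.length ∧ List.Lex (· < ·) Y X)

private lemma lex_append_same {Λ : ℕ} :
    ∀ {X Y : List (Fin Λ)}, X.length = Y.length → List.Lex (· < ·) X Y →
      ∀ S, List.Lex (· < ·) (X ++ S) (Y ++ S) := by
  intro X Y hlen h
  induction h with
  | nil => simp at hlen
  | @cons a l₁ l₂ h ih =>
      intro S
      exact List.Lex.cons (ih (by simpa using hlen) S)
  | rel h =>
      intro S
      exact List.Lex.rel h

/-- closure of the raising sector of the centrix algebra under overlap:
if `I > J`, `K > L`, `J = J₁·J₂`, `K = K₁·K₂` with `J₂ = K₁` and `K₂` nonempty,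
then `I·K₂ > J₁·L`. -/
theorem stmt_17 (Λ : ℕ) (I J K L J₁ J₂ K₁ K₂ : List (Fin Λ))
    (hI : I ≠ []) (hJ : J ≠ []) (hK : K ≠ []) (hL : L ≠ [])
    (hJ₁ : J₁ ≠ []) (hJ₂ : J₂ ≠ []) (hK₂ : K₂ ≠ [])
    (hJd : J = J₁ ++ J₂) (hKd : K = K₁ ++ K₂) (hJK : J₂ = K₁)
    (hIJ : seqGt I J) (hKL : seqGt K L) :
    seqGt (I ++ K₂) (J₁ ++ L) := by
  subst hJK hJd hKd
  rcases hIJ with h1 | ⟨h1, hlex1⟩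
  · left
    rcases hKL with h2 | ⟨h2, _⟩ <;> simp only [List.length_append] at * <;> omega
  · rcases hKL with h2 | ⟨h2, hlex2⟩
    · left
      simp only [List.length_append] at *
      omega
    · right
      constructor
      · simp only [List.length_append] at *
        omega
      · -- J₁ ++ L < J₁ ++ (J₂ ++ K₂) = (J₁ ++ J₂) ++ K₂ < I ++ K₂
        have s1 : List.Lex (· < ·) (J₁ ++ L) (J₁ ++ (J₂ ++ K₂)) :=
          List.Lex.append_left _ hlex2 J₁
        have s2 : List.Lex (· < ·) ((J₁ ++ J₂) ++ K₂) (I ++ K₂) :=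
          lex_append_same h1.symm hlex1 K₂
        rw [← List.append_assoc] at s1
        exact lt_trans (α := List (Fin Λ)) s1 s2
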